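/- Let k ≥ 3 and let j be an integer with 3 ≤ j ≤ k. Then ∫₀^∞ (-1)^{j-1} · p_k^{(j-1)}(√s) ds = 0, where p_k^{(j-1)} denotes the (j−1)-st derivative of the smooth function p_k(x) = x^{k-1} e^{-x²/2} / (Γ(k/2) · 2^{(k-2)/2}) on ℝ, and the integrand is integrable on [0,∞). -/

import Mathlib

open MeasureTheory Set Polynomial Filter Topology

/-- The density of the χ-distribution with `k` degrees of freedom, regarded as a smooth function
on all of `ℝ`: `p_k(x) = x^{k-1} e^{-x²/2} / (Γ(k/2) · 2^{(k-2)/2})`. -/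
noncomputable def chiDensity (k : ℕ) (x : ℝ) : ℝ :=
  x ^ (k - 1) * Real.exp (-x ^ 2 / 2) /
    (Real.Gamma ((k : ℝ) / 2) * (2 : ℝ) ^ (((k : ℝ) - 2) / 2))

noncomputable def chiPoly (k : ℕ) : ℕ → Polynomial ℝ
  | 0 => Polynomial.C (1 / (Real.Gamma ((k : ℝ) / 2) * (2 : ℝ) ^ (((k : ℝ) - 2) / 2)))
      * Polynomial.X ^ (k - 1)
  | (m + 1) => (chiPoly k m).derivative - Polynomial.X * chiPoly k m

lemma hasDerivAt_poly_gauss (Q : Polynomial ℝ) (x : ℝ) :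
    HasDerivAt (fun y => Q.eval y * Real.exp (-y ^ 2 / 2))
      ((Q.derivative - Polynomial.X * Q).eval x * Real.exp (-x ^ 2 / 2)) x := by
  have h0 : HasDerivAt (fun y : ℝ => -y ^ 2 / 2) (-x) x := by
    have := ((hasDerivAt_pow 2 x).neg).div_const 2
    refine this.congr_deriv ?_
    push_cast
    norm_num
    ring
  have h1 := h0.exp
  have := (Q.hasDerivAt x).mul h1
  refine this.congr_deriv ?_
  simp only [Polynomial.eval_sub, Polynomial.eval_mul, Polynomial.eval_X]
  ring

lemma iteratedDeriv_chiDensity (k m : ℕ) :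
    iteratedDeriv m (chiDensity k) = fun x => (chiPoly k m).eval x * Real.exp (-x ^ 2 / 2) := by
  induction m with
  | zero =>
      funext x
      simp only [iteratedDeriv_zero, chiDensity, chiPoly, Polynomial.eval_mul,
        Polynomial.eval_C, Polynomial.eval_pow, Polynomial.eval_X]
      ring
  | succ m ih =>
      funext x
      rw [iteratedDeriv_succ, ih]
      exact (hasDerivAt_poly_gauss (chiPoly k m) x).deriv

lemma poly_gauss_tendsto (Q : Polynomial ℝ) :
    Tendsto (fun x => Q.eval x * Real.exp (-x ^ 2 / 2)) atTop (𝓝 0) := by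
  induction Q using Polynomial.induction_on' with
  | monomial n c =>
      have h0 : Tendsto (fun x : ℝ => |c| * (x ^ n * Real.exp (-x))) atTop (𝓝 (|c| * 0)) :=
        tendsto_const_nhds.mul (Real.tendsto_pow_mul_exp_neg_atTop_nhds_zero n)
      rw [mul_zero] at h0
      refine squeeze_zero_norm' ?_ h0
      filter_upwards [eventually_ge_atTop (2 : ℝ)] with x hx
      have hx0 : (0 : ℝ) ≤ x := by linarith
      have hexp : Real.exp (-x ^ 2 / 2) ≤ Real.exp (-x) := Real.exp_le_exp.2 (by nlinarith)
      simp only [Polynomial.eval_monomial, Real.norm_eq_abs, abs_mul, abs_pow,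
        abs_of_nonneg hx0, Real.abs_exp]
      rw [mul_assoc]
      gcongr
  | add p q hp hq =>
      simpa [add_mul] using hp.add hq

lemma poly_gauss_integrableOn (Q : Polynomial ℝ) :
    IntegrableOn (fun x => Q.eval x * Real.exp (-x ^ 2 / 2)) (Ioi (0 : ℝ)) := by
  induction Q using Polynomial.induction_on' with
  | monomial n c =>
      have h := integrableOn_rpow_mul_exp_neg_mul_rpow (p := 2) (s := (n : ℝ)) (b := 1/2)
        (lt_of_lt_of_le neg_one_lt_zero (Nat.cast_nonneg n)) (by norm_num) (by norm_num)
      have h2 : IntegrableOn (fun x : ℝ => c * (x ^ (n : ℝ) * Real.exp (-(1/2) * x ^ (2 : ℝ))))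
          (Ioi (0 : ℝ)) := h.const_mul c
      simp only [Real.rpow_natCast, Real.rpow_two] at h2
      refine h2.congr_fun (fun x hx => ?_) measurableSet_Ioi
      simp only [Polynomial.eval_monomial]
      ring_nf
  | add p q hp hq =>
      simpa [add_mul, Pi.add_def] using hp.add hq

lemma X_pow_dvd_chiPoly (k m : ℕ) :
    (Polynomial.X : Polynomial ℝ) ^ (k - 1 - m) ∣ chiPoly k m := by
  induction m with
  | zero => rw [chiPoly]; simpa using dvd_mul_left ((Polynomial.X : Polynomial ℝ) ^ (k - 1)) _
  | succ m ih =>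
      obtain ⟨R, hR⟩ := ih
      have hsub : k - 1 - (m + 1) = k - 1 - m - 1 := by omega
      rw [chiPoly, hR, hsub]
      apply dvd_sub
      · rw [Polynomial.derivative_mul, Polynomial.derivative_X_pow]
        exact dvd_add (Dvd.dvd.mul_right (Dvd.dvd.mul_left (dvd_refl _) _) _)
          (Dvd.dvd.mul_right (pow_dvd_pow _ (Nat.sub_le _ _)) _)
      · exact Dvd.dvd.mul_left (Dvd.dvd.mul_right (pow_dvd_pow _ (Nat.sub_le _ _)) _) _

lemma chiPoly_eval_zero (k m : ℕ) (h : m + 2 ≤ k) : (chiPoly k m).eval 0 = 0 := by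
  have hdvd : (Polynomial.X : Polynomial ℝ) ∣ chiPoly k m :=
    dvd_trans (dvd_pow_self _ (by omega : k - 1 - m ≠ 0)) (X_pow_dvd_chiPoly k m)
  obtain ⟨R, hR⟩ := hdvd
  simp [hR]

lemma sq_image_Ioi : (fun x : ℝ => x ^ 2) '' Ioi 0 = Ioi 0 := by
  ext y
  constructor
  · rintro ⟨x, hx, rfl⟩
    exact pow_pos (show (0:ℝ) < x from hx) 2
  · intro hy
    exact ⟨Real.sqrt y, Real.sqrt_pos.2 hy, Real.sq_sqrt (le_of_lt hy)⟩

lemma sq_injOn_Ioi : InjOn (fun x : ℝ => x ^ 2) (Ioi 0) := by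
  intro a ha b hb hab
  simp only at hab
  have ha' := mem_Ioi.1 ha
  have hb' := mem_Ioi.1 hb
  apply le_antisymm <;> nlinarith

lemma sq_hasDerivWithinAt : ∀ x ∈ Ioi (0 : ℝ),
    HasDerivWithinAt (fun x : ℝ => x ^ 2) (2 * x) (Ioi 0) x := by
  intro x _
  simpa using (hasDerivAt_pow 2 x).hasDerivWithinAt

/-- for `k ≥ 3` and an integer `j` with `3 ≤ j ≤ k`,
`∫₀^∞ (-1)^{j-1} p_k^{(j-1)}(√s) ds = 0`, the integrand being integrable on `[0,∞)`. -/
theorem integral_iteratedDeriv_chiDensity_sqrt (k j : ℕ) (hk : 3 ≤ k)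
    (hj₁ : 3 ≤ j) (hj₂ : j ≤ k) :
    IntegrableOn
      (fun s => (-1 : ℝ) ^ (j - 1) * iteratedDeriv (j - 1) (chiDensity k) (Real.sqrt s))
      (Ici (0 : ℝ)) ∧
    (∫ s in Ioi (0 : ℝ),
      (-1 : ℝ) ^ (j - 1) * iteratedDeriv (j - 1) (chiDensity k) (Real.sqrt s)) = 0 := by
  obtain ⟨m, rfl⟩ : ∃ m, j = m + 3 := ⟨j - 3, by omega⟩
  have hj1 : m + 3 - 1 = m + 2 := rfl
  rw [hj1]
  set Q := chiPoly k (m + 2) with hQ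
  -- the integrand after change of variables
  have hrep := iteratedDeriv_chiDensity k (m + 2)
  -- base integrability on Ioi 0
  have hbase : IntegrableOn
      (fun s => iteratedDeriv (m + 2) (chiDensity k) (Real.sqrt s)) (Ioi (0 : ℝ)) := by
    rw [← sq_image_Ioi, integrableOn_image_iff_integrableOn_abs_deriv_smul
      measurableSet_Ioi sq_hasDerivWithinAt sq_injOn_Ioi]
    refine (poly_gauss_integrableOn (Polynomial.C 2 * Polynomial.X * Q)).congr_fun
      (fun x hx => ?_) measurableSet_Ioi
    have hx0 : (0 : ℝ) < x := hx
    simp only [hrep, Real.sqrt_sq hx0.le, smul_eq_mul, abs_of_pos (by linarith : (0:ℝ) < 2 * x),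
      Polynomial.eval_mul, Polynomial.eval_C, Polynomial.eval_X]
    ring
  constructor
  · rw [integrableOn_Ici_iff_integrableOn_Ioi]
    exact hbase.const_mul _
  · rw [integral_const_mul]
    suffices h : (∫ s in Ioi (0 : ℝ), iteratedDeriv (m + 2) (chiDensity k) (Real.sqrt s)) = 0 by
      rw [h, mul_zero]
    rw [← sq_image_Ioi, integral_image_eq_integral_abs_deriv_smul measurableSet_Ioi
      sq_hasDerivWithinAt sq_injOn_Ioi]
    have hcongr : EqOn (fun x : ℝ => |2 * x| • iteratedDeriv (m + 2) (chiDensity k)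
        (Real.sqrt (x ^ 2)))
        (fun x => (Polynomial.C 2 * Polynomial.X * Q).eval x * Real.exp (-x ^ 2 / 2))
        (Ioi 0) := by
      intro x hx
      have hx0 : (0 : ℝ) < x := hx
      simp only [hrep, Real.sqrt_sq hx0.le, smul_eq_mul,
        abs_of_pos (by linarith : (0:ℝ) < 2 * x),
        Polynomial.eval_mul, Polynomial.eval_C, Polynomial.eval_X]
      ring
    rw [setIntegral_congr_fun measurableSet_Ioi hcongr]
    set S := Polynomial.C 2 * Polynomial.X * chiPoly k (m + 1) - Polynomial.C 2 * chiPoly k m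
      with hS
    have hSd : S.derivative - Polynomial.X * S = Polynomial.C 2 * Polynomial.X * Q := by
      rw [hQ, hS]
      simp only [chiPoly, Polynomial.derivative_sub, Polynomial.derivative_mul,
        Polynomial.derivative_C, Polynomial.derivative_X]
      ring
    have hF : ∀ x ∈ Ioi (0 : ℝ), HasDerivAt (fun y => S.eval y * Real.exp (-y ^ 2 / 2))
        ((Polynomial.C 2 * Polynomial.X * Q).eval x * Real.exp (-x ^ 2 / 2)) x :=
      fun x _ => hSd ▸ hasDerivAt_poly_gauss S x
    have hcont : ContinuousWithinAt (fun y => S.eval y * Real.exp (-y ^ 2 / 2)) (Ici 0) 0 :=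
      ((S.continuous).mul (Real.continuous_exp.comp (by continuity))).continuousWithinAt
    have hint := poly_gauss_integrableOn (Polynomial.C 2 * Polynomial.X * Q)
    have htend := poly_gauss_tendsto S
    rw [integral_Ioi_of_hasDerivAt_of_tendsto hcont hF hint htend]
    have h0 : (chiPoly k m).eval 0 = 0 := chiPoly_eval_zero k m (by omega)
    simp [hS, h0]
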